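/- Let (X, ρ) be a CAT(−1) space and y₀, y₁, y₂, y₃ ∈ X with ρ(y₁, y₂) > 0. Suppose ρ(y₀,y₁) + ρ(y₁,y₂) − ρ(y₀,y₂) ≤ η₁ and ρ(y₁,y₂) + ρ(y₂,y₃) − ρ(y₁,y₃) ≤ η₂ for some η₁, η₂ ≥ 0. Then ρ(y₀,y₁) + ρ(y₁,y₂) + ρ(y₂,y₃) − ρ(y₀,y₃) ≤ (1 + ρ(y₂,y₃)/ρ(y₁,y₂)) · (η₁ + arccosh(e^{η₂})). -/

import Mathlib

/-- A (geodesic) `CAT(-1)` metric space, encoded via the existence of division points on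
geodesic segments together with the hyperbolic comparison inequality
(law-of-cosines form of the `CAT(-1)` condition). -/
def IsCATMinusOne (X : Type*) [MetricSpace X] : Prop :=
  (∀ x y : X, ∀ t : ℝ, 0 ≤ t → t ≤ 1 →
    ∃ m : X, dist x m = t * dist x y ∧ dist m y = (1 - t) * dist x y) ∧
  (∀ x y z m : X, dist y m + dist m z = dist y z →
    Real.cosh (dist x m) * Real.sinh (dist y z) ≤
      Real.cosh (dist x y) * Real.sinh (dist m z) +
        Real.cosh (dist x z) * Real.sinh (dist y m))

/-- The inverse hyperbolic cosine, defined on `[1, ∞)` by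
`arcosh x = log (x + √(x² - 1))`. -/
noncomputable def arcosh (x : ℝ) : ℝ := Real.log (x + Real.sqrt (x ^ 2 - 1))

namespace StmtSixAux

open Real

lemma cosh_arcosh_exp {t : ℝ} (ht : 0 ≤ t) :
    Real.cosh (_root_.arcosh (Real.exp t)) = Real.exp t := by
  have hx : (1 : ℝ) ≤ Real.exp t := Real.one_le_exp ht
  have h1 : (0 : ℝ) ≤ (Real.exp t) ^ 2 - 1 := by nlinarith
  have hs : Real.sqrt ((Real.exp t) ^ 2 - 1) ^ 2 = (Real.exp t) ^ 2 - 1 := Real.sq_sqrt h1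
  have hsn : 0 ≤ Real.sqrt ((Real.exp t) ^ 2 - 1) := Real.sqrt_nonneg _
  have hpos : 0 < Real.exp t + Real.sqrt ((Real.exp t) ^ 2 - 1) := by linarith
  unfold _root_.arcosh
  rw [Real.cosh_eq, Real.exp_log hpos, Real.exp_neg, Real.exp_log hpos]
  field_simp
  nlinarith [hs]

lemma arcosh_exp_nonneg {t : ℝ} (ht : 0 ≤ t) : 0 ≤ _root_.arcosh (Real.exp t) := by
  have hx : (1 : ℝ) ≤ Real.exp t := Real.one_le_exp ht
  have hsn : 0 ≤ Real.sqrt ((Real.exp t) ^ 2 - 1) := Real.sqrt_nonneg _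
  exact Real.log_nonneg (by linarith)

lemma arcosh_exp_mono {t u : ℝ} (ht : 0 ≤ t) (htu : t ≤ u) :
    _root_.arcosh (Real.exp t) ≤ _root_.arcosh (Real.exp u) := by
  have hu : 0 ≤ u := ht.trans htu
  have h : Real.cosh (_root_.arcosh (Real.exp t)) ≤ Real.cosh (_root_.arcosh (Real.exp u)) := by
    rw [cosh_arcosh_exp ht, cosh_arcosh_exp hu]
    exact Real.exp_le_exp.2 htu
  have h2 := Real.cosh_le_cosh.1 h
  rwa [abs_of_nonneg (arcosh_exp_nonneg ht), abs_of_nonneg (arcosh_exp_nonneg hu)] at h2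

lemma self_le_arcosh_exp {t : ℝ} (ht : 0 ≤ t) : t ≤ _root_.arcosh (Real.exp t) := by
  have h : Real.cosh t ≤ Real.cosh (_root_.arcosh (Real.exp t)) := by
    rw [cosh_arcosh_exp ht, Real.cosh_eq]
    linarith [Real.exp_le_exp.2 (neg_le_self ht)]
  have h2 := Real.cosh_le_cosh.1 h
  rwa [abs_of_nonneg ht, abs_of_nonneg (arcosh_exp_nonneg ht)] at h2

lemma claimC {d : ℝ} (hd : 0 ≤ d) :
    _root_.arcosh (Real.exp (d / 2)) + d / 2 ≤ _root_.arcosh (Real.exp d) := by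
  have hd2 : 0 ≤ d / 2 := by linarith
  set A1 := _root_.arcosh (Real.exp (d / 2)) with hA1
  set A2 := _root_.arcosh (Real.exp d) with hA2
  have hc1 : Real.cosh A1 = Real.exp (d / 2) := cosh_arcosh_exp hd2
  have hc2 : Real.cosh A2 = Real.exp d := cosh_arcosh_exp hd
  have hA1n : 0 ≤ A1 := arcosh_exp_nonneg hd2
  have hA2n : 0 ≤ A2 := arcosh_exp_nonneg hd
  set S := Real.sinh A1 with hSdef
  have hS : 0 ≤ S := Real.sinh_nonneg_iff.2 hA1n
  have hc1sq : Real.cosh A1 ^ 2 = Real.exp (d / 2) ^ 2 := by rw [hc1]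
  have hS2 : S ^ 2 = Real.exp (d / 2) ^ 2 - 1 := by
    have h3 := Real.cosh_sq_sub_sinh_sq A1
    rw [hSdef]; linarith [h3, hc1sq]
  have hE1 : (1 : ℝ) ≤ Real.exp (d / 2) := Real.one_le_exp hd2
  have hEd : Real.exp (d / 2) * Real.exp (d / 2) = Real.exp d := by
    rw [← Real.exp_add]; ring_nf
  have hkey : Real.cosh (A1 + d / 2) ≤ Real.cosh A2 := by
    rw [Real.cosh_add, hc1, hc2, ← hEd]
    have hch : Real.cosh (d / 2) = (Real.exp (d / 2) + (Real.exp (d / 2))⁻¹) / 2 := by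
      rw [Real.cosh_eq, Real.exp_neg]
    have hsh : Real.sinh (d / 2) = (Real.exp (d / 2) - (Real.exp (d / 2))⁻¹) / 2 := by
      rw [Real.sinh_eq, Real.exp_neg]
    rw [hch, hsh, ← hSdef]
    set E := Real.exp (d / 2) with hEdef
    have hEpos : 0 < E := Real.exp_pos _
    have hSE : S ≤ E := by nlinarith [hS2, hS]
    have hEI : E * E⁻¹ = 1 := mul_inv_cancel₀ (ne_of_gt hEpos)
    have hcube : S * (S * S) ≤ E * (S * S) :=
      mul_le_mul_of_nonneg_right hSE (mul_nonneg hS hS)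
    have h2E : (0:ℝ) < 2 * E := by linarith
    have hgoal' : (E * ((E + E⁻¹) / 2) + S * ((E - E⁻¹) / 2)) * (2 * E) ≤ (E * E) * (2 * E) := by
      nlinarith [hS2, hEI, hcube]
    exact le_of_mul_le_mul_right hgoal' h2E
  have habs := Real.cosh_le_cosh.1 hkey
  rwa [abs_of_nonneg (by linarith : (0:ℝ) ≤ A1 + d / 2), abs_of_nonneg hA2n] at habs

/-- The thin-triangle estimate in exponential form. -/
lemma lemL1 {s s' d : ℝ} (hs : 0 ≤ s) (hs' : 0 ≤ s') (hd : 0 ≤ d) :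
    Real.cosh (s + d) * Real.sinh s' + Real.cosh (s' + d) * Real.sinh s ≤
      Real.exp d * Real.sinh (s + s') := by
  set A := Real.exp s with hA
  set B := Real.exp s' with hB
  set E := Real.exp d with hE
  have hA1 : (1:ℝ) ≤ A := Real.one_le_exp hs
  have hB1 : (1:ℝ) ≤ B := Real.one_le_exp hs'
  have hE1 : (1:ℝ) ≤ E := Real.one_le_exp hd
  have hApos : (0:ℝ) < A := Real.exp_pos _
  have hBpos : (0:ℝ) < B := Real.exp_pos _
  have hEpos : (0:ℝ) < E := Real.exp_pos _
  have e1 : Real.cosh (s + d) = (A * E + (A * E)⁻¹) / 2 := by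
    rw [Real.cosh_eq, Real.exp_neg, Real.exp_add]
  have e2 : Real.cosh (s' + d) = (B * E + (B * E)⁻¹) / 2 := by
    rw [Real.cosh_eq, Real.exp_neg, Real.exp_add]
  have e3 : Real.sinh s' = (B - B⁻¹) / 2 := by
    rw [Real.sinh_eq, Real.exp_neg]
  have e4 : Real.sinh s = (A - A⁻¹) / 2 := by
    rw [Real.sinh_eq, Real.exp_neg]
  have e5 : Real.sinh (s + s') = (A * B - (A * B)⁻¹) / 2 := by
    rw [Real.sinh_eq, Real.exp_neg, Real.exp_add]
  rw [e1, e2, e3, e4, e5, ← sub_nonneg]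
  have key : (0:ℝ) ≤ (E * E - 1) * (A * A + B * B - 2) :=
    mul_nonneg (by nlinarith) (by nlinarith)
  have hid : E * ((A * B - (A * B)⁻¹) / 2) -
      ((A * E + (A * E)⁻¹) / 2 * ((B - B⁻¹) / 2) + (B * E + (B * E)⁻¹) / 2 * ((A - A⁻¹) / 2)) =
      ((E * E - 1) * (A * A + B * B - 2)) / (4 * (A * B * E)) := by
    field_simp
    ring
  rw [hid]
  exact div_nonneg key (by positivity)

/-- The core concavity inequality. -/
lemma star {lam s c : ℝ} (hl1 : -1 ≤ lam) (hl2 : lam ≤ 1) (hs : 0 ≤ s) (hsc : s ≤ c) :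
    Real.sinh (c - s) + Real.exp (lam * c) * Real.sinh s ≤ Real.exp (lam * s) * Real.sinh c := by
  rcases eq_or_lt_of_le (hs.trans hsc) with hc0 | hc0
  · have hc : c = 0 := hc0.symm
    have hss : s = 0 := le_antisymm (by linarith) hs
    simp [hc, hss]
  · set p := s / c with hp
    have hp0 : 0 ≤ p := div_nonneg hs hc0.le
    have hp1 : p ≤ 1 := (div_le_one hc0).2 hsc
    set u := Real.exp ((lam + 1) * c) with hu
    set U := Real.exp (2 * c) with hU
    have hu1 : (1:ℝ) ≤ u := Real.one_le_exp (by nlinarith)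
    have huU : u ≤ U := Real.exp_le_exp.2 (by nlinarith)
    have hU1 : (1:ℝ) < U := by
      have := Real.add_one_le_exp (2 * c); rw [hU]; nlinarith
    have hden : (0:ℝ) < U - 1 := by linarith
    set β := (U - u) / (U - 1) with hβ
    set γ := (u - 1) / (U - 1) with hγ
    have hβ0 : 0 ≤ β := div_nonneg (by linarith) hden.le
    have hγ0 : 0 ≤ γ := div_nonneg (by linarith) hden.le
    have hsum : β + γ = 1 := by rw [hβ, hγ]; field_simp; ring
    have hcomb : β • (1:ℝ) + γ • U = u := by
      simp only [smul_eq_mul, mul_one]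
      rw [hβ, hγ]; field_simp; ring
    have hconc := (Real.concaveOn_rpow hp0 hp1).2
      (Set.mem_Ici.2 (by norm_num : (0:ℝ) ≤ 1))
      (Set.mem_Ici.2 (by linarith : (0:ℝ) ≤ U)) hβ0 hγ0 hsum
    rw [hcomb] at hconc
    simp only [smul_eq_mul, Real.one_rpow, mul_one] at hconc
    have hUp : U ^ p = Real.exp (2 * s) := by
      rw [hU, ← Real.exp_mul]
      congr 1
      rw [hp]; field_simp
    have hup : u ^ p = Real.exp ((lam + 1) * s) := by
      rw [hu, ← Real.exp_mul]
      congr 1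
      rw [hp]; field_simp
    rw [hUp, hup] at hconc
    -- hconc : β + γ * exp (2 s) ≤ exp ((lam+1) s)
    set Aa := Real.exp s with hAa
    set Bc := Real.exp c with hBc
    have hApos : (0:ℝ) < Aa := Real.exp_pos _
    have hBpos : (0:ℝ) < Bc := Real.exp_pos _
    have hB1 : (1:ℝ) ≤ Bc := Real.one_le_exp (by linarith)
    have he2s : Real.exp (2 * s) = Aa * Aa := by rw [hAa, ← Real.exp_add]; ring_nf
    have hes : Real.exp ((lam + 1) * s) = Real.exp (lam * s) * Aa := by
      rw [hAa, ← Real.exp_add]; ring_nf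
    have hec : u = Real.exp (lam * c) * Bc := by
      rw [hu, hBc, ← Real.exp_add]; ring_nf
    have hU2 : U = Bc * Bc := by rw [hU, hBc, ← Real.exp_add]; ring_nf
    rw [he2s, hes] at hconc
    have hBinv : Bc⁻¹ ≤ Bc := by
      have h2 : Bc⁻¹ ≤ 1 := by
        rw [inv_le_one_iff₀]; right; exact hB1
      linarith
    have hfac : (0:ℝ) ≤ (Bc - Bc⁻¹) / (2 * Aa) := div_nonneg (by linarith) (by positivity)
    have hmul := mul_le_mul_of_nonneg_right hconc hfac
    have hden2 : Bc * Bc - 1 ≠ 0 := by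
      rw [← hU2]; exact ne_of_gt hden
    have hsinhc : Real.sinh c = (Bc - Bc⁻¹) / 2 := by
      rw [Real.sinh_eq, Real.exp_neg]
    have hsinhs : Real.sinh s = (Aa - Aa⁻¹) / 2 := by
      rw [Real.sinh_eq, Real.exp_neg]
    have hsinhcs : Real.sinh (c - s) = (Bc / Aa - Aa / Bc) / 2 := by
      rw [Real.sinh_eq, Real.exp_neg, Real.exp_sub, inv_div]
    have hid1 : (β + γ * (Aa * Aa)) * ((Bc - Bc⁻¹) / (2 * Aa)) =
        (Bc / Aa - Aa / Bc) / 2 + Real.exp (lam * c) * ((Aa - Aa⁻¹) / 2) := by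
      rw [hβ, hγ, hU2, hec]
      have hBne2 : Bc ^ 2 - 1 ≠ 0 := by rw [sq]; exact hden2
      field_simp
      ring
    have hid2 : Real.exp (lam * s) * Aa * ((Bc - Bc⁻¹) / (2 * Aa)) =
        Real.exp (lam * s) * ((Bc - Bc⁻¹) / 2) := by
      field_simp
    rw [hid1, hid2] at hmul
    rw [hsinhc, hsinhs, hsinhcs]
    exact hmul

lemma eprime {r mu s c : ℝ} (h1 : -1 ≤ mu) (h2 : mu ≤ 1) (hs : 0 ≤ s) (hsc : s ≤ c) :
    Real.cosh r * Real.sinh (c - s) + Real.cosh (r + mu * c) * Real.sinh s ≤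
      Real.cosh (r + mu * s) * Real.sinh c := by
  have S1 := star h1 h2 hs hsc
  have S2 := star (by linarith : -1 ≤ -mu) (by linarith : -mu ≤ 1) hs hsc
  have P1 := mul_le_mul_of_nonneg_left S1 (Real.exp_pos r).le
  have P2 := mul_le_mul_of_nonneg_left S2 (Real.exp_pos (-r)).le
  have a1 : Real.exp (r + mu * c) = Real.exp r * Real.exp (mu * c) := Real.exp_add _ _
  have a2 : Real.exp (-(r + mu * c)) = Real.exp (-r) * Real.exp (-mu * c) := by
    rw [← Real.exp_add]; congr 1; ring
  have a3 : Real.exp (r + mu * s) = Real.exp r * Real.exp (mu * s) := Real.exp_add _ _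
  have a4 : Real.exp (-(r + mu * s)) = Real.exp (-r) * Real.exp (-mu * s) := by
    rw [← Real.exp_add]; congr 1; ring
  rw [Real.cosh_eq, Real.cosh_eq, Real.cosh_eq, a1, a2, a3, a4]
  nlinarith [P1, P2]

lemma extrap {r s c u w eps : ℝ} (hs : 0 < s) (hsc : s ≤ c) (heps : 0 ≤ eps)
    (hu1 : r + s - eps ≤ u) (hu2 : s - r ≤ u) (hw0 : 0 ≤ w) (hwrc : r - c ≤ w)
    (hcomp : Real.cosh u * Real.sinh c ≤
      Real.cosh r * Real.sinh (c - s) + Real.cosh w * Real.sinh s) :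
    r + c - w ≤ c / s * eps := by
  have hc0 : 0 < c := lt_of_lt_of_le hs hsc
  rcases le_or_gt (2 * s) eps with hbig | hsml
  · have h2c : c / s * (2 * s) = 2 * c := by field_simp
    have h3 : c / s * (2 * s) ≤ c / s * eps :=
      mul_le_mul_of_nonneg_left hbig (by positivity)
    rw [h2c] at h3
    linarith
  · set mu := 1 - eps / s with hmu
    have hmuss : mu * s = s - eps := by
      rw [hmu, sub_mul, one_mul, div_mul_cancel₀ _ hs.ne']
    have hmucc : mu * c = c - c / s * eps := by
      rw [hmu, sub_mul, one_mul]
      congr 1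
      ring
    have hmu1 : mu ≤ 1 := by
      rw [hmu]; have : 0 ≤ eps / s := div_nonneg heps hs.le; linarith
    have hmu2 : -1 ≤ mu := by
      rw [hmu]
      have : eps / s ≤ 2 := (div_le_iff₀ hs).2 (by linarith)
      linarith
    have hu0 : 0 ≤ u := by linarith
    have habs : |r + mu * s| ≤ |u| := by
      rw [abs_of_nonneg hu0, abs_le]
      constructor <;> (rw [hmuss]; linarith)
    have hcu : Real.cosh (r + mu * s) ≤ Real.cosh u := Real.cosh_le_cosh.2 habs
    have hsc0 : 0 ≤ Real.sinh c := Real.sinh_nonneg_iff.2 hc0.le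
    have hEP := eprime (r := r) hmu2 hmu1 hs.le hsc
    have hchain : Real.cosh (r + mu * c) * Real.sinh s ≤ Real.cosh w * Real.sinh s := by
      have h4 := mul_le_mul_of_nonneg_right hcu hsc0
      linarith
    have hcw : Real.cosh (r + mu * c) ≤ Real.cosh w :=
      le_of_mul_le_mul_right hchain (Real.sinh_pos_iff.2 hs)
    have h5 := Real.cosh_le_cosh.1 hcw
    rw [abs_of_nonneg hw0] at h5
    have h6 : r + mu * c ≤ w := (le_abs_self _).trans h5
    rw [hmucc] at h6
    linarith

lemma final_alg {a b c δ E : ℝ} (ha : 0 < a) (hb : 0 ≤ b) (hδ0 : 0 ≤ δ)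
    (hδ2b : δ ≤ 2 * b) (hδE : δ ≤ E) (hE2a : E < 2 * a) (hc : c = a + b - δ) :
    c / (a - δ / 2) * (E - δ) + δ ≤ (a + b) / a * E := by
  have hs0 : 0 < a - δ / 2 := by linarith
  rw [div_mul_eq_mul_div, div_mul_eq_mul_div, div_add' _ _ _ (ne_of_gt hs0),
    div_le_div_iff₀ hs0 ha]
  have t1 : 0 ≤ δ * ((2 * a - E) * b) :=
    mul_nonneg hδ0 (mul_nonneg (by linarith) hb)
  have t2 : 0 ≤ δ * ((E - δ) * a) :=
    mul_nonneg hδ0 (mul_nonneg (by linarith) ha.le)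
  subst hc
  nlinarith [t1, t2]

end StmtSixAux

open StmtSixAux in
theorem stmt_6 {X : Type*} [MetricSpace X] (hX : IsCATMinusOne X)
    (y₀ y₁ y₂ y₃ : X) (η₁ η₂ : ℝ) (hη₁ : 0 ≤ η₁) (hη₂ : 0 ≤ η₂)
    (hpos : 0 < dist y₁ y₂)
    (h₁ : dist y₀ y₁ + dist y₁ y₂ - dist y₀ y₂ ≤ η₁)
    (h₂ : dist y₁ y₂ + dist y₂ y₃ - dist y₁ y₃ ≤ η₂) :
    dist y₀ y₁ + dist y₁ y₂ + dist y₂ y₃ - dist y₀ y₃ ≤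
      (1 + dist y₂ y₃ / dist y₁ y₂) * (η₁ + arcosh (Real.exp η₂)) := by
  obtain ⟨hgeo, hcomp⟩ := hX
  set r := dist y₀ y₁ with hr
  set a := dist y₁ y₂ with ha
  set b := dist y₂ y₃ with hb
  set c := dist y₁ y₃ with hc
  set p02 := dist y₀ y₂ with hp02
  set p03 := dist y₀ y₃ with hp03
  set h := arcosh (Real.exp η₂) with hhdef
  have hh0 : 0 ≤ h := arcosh_exp_nonneg hη₂
  have hhη : η₂ ≤ h := self_le_arcosh_exp hη₂
  have hb0 : 0 ≤ b := dist_nonneg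
  have hr0 : 0 ≤ r := dist_nonneg
  have hp03n : 0 ≤ p03 := dist_nonneg
  by_cases hT : 2 * a ≤ η₁ + h
  · -- trivial case
    have t1 : p02 ≤ p03 + b := by
      calc p02 ≤ dist y₀ y₃ + dist y₃ y₂ := dist_triangle y₀ y₃ y₂
        _ = p03 + b := by rw [dist_comm y₃ y₂]
    have hD : r + a + b - p03 ≤ η₁ + 2 * b := by linarith
    have t2 : 2 * b ≤ b / a * (η₁ + h) := by
      rw [div_mul_eq_mul_div, le_div_iff₀ hpos]
      nlinarith [mul_le_mul_of_nonneg_left hT hb0]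
    have t3 : (1 + b / a) * (η₁ + h) = (η₁ + h) + b / a * (η₁ + h) := by ring
    linarith
  · push_neg at hT
    set δ := a + b - c with hδdef
    have hδ0 : 0 ≤ δ := by
      have h4 := dist_triangle y₁ y₂ y₃
      rw [← ha, ← hb, ← hc] at h4
      linarith
    have hδη : δ ≤ η₂ := by linarith [h₂]
    have hδ2b : δ ≤ 2 * b := by
      have h4 : a ≤ c + b := by
        calc a ≤ dist y₁ y₃ + dist y₃ y₂ := dist_triangle y₁ y₃ y₂
          _ = c + b := by rw [dist_comm y₃ y₂]
      linarith
    have hδ2a : δ ≤ 2 * a := by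
      have h4 : b ≤ a + c := by
        calc b ≤ dist y₂ y₁ + dist y₁ y₃ := dist_triangle y₂ y₁ y₃
          _ = a + c := by rw [dist_comm y₂ y₁]
      linarith
    have hδh : δ ≤ h := hδη.trans hhη
    set s := a - δ / 2 with hsdef
    have hs0 : 0 < s := by rw [hsdef]; linarith
    have hcs : s ≤ c := by rw [hsdef]; linarith
    have hc0 : 0 < c := lt_of_lt_of_le hs0 hcs
    obtain ⟨m, hm1, hm2⟩ := hgeo y₁ y₃ (s / c) (by positivity) ((div_le_one hc0).2 hcs)
    have hm1' : dist y₁ m = s := by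
      rw [hm1, ← hc, div_mul_cancel₀ _ hc0.ne']
    have hm2' : dist m y₃ = c - s := by
      rw [hm2, ← hc, sub_mul, one_mul, div_mul_cancel₀ _ hc0.ne']
    have hsum : dist y₁ m + dist m y₃ = dist y₁ y₃ := by
      rw [hm1', hm2', ← hc]; ring
    -- comparison for y₂ : thin triangle
    have hC2 := hcomp y₂ y₁ y₃ m hsum
    rw [hm1', hm2', ← hc, dist_comm y₂ y₁, ← ha, ← hb] at hC2
    have hL1 : Real.cosh (s + δ / 2) * Real.sinh (c - s) +
        Real.cosh ((c - s) + δ / 2) * Real.sinh s ≤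
        Real.exp (δ / 2) * Real.sinh (s + (c - s)) :=
      lemL1 hs0.le (by linarith) (by linarith)
    have hsa : s + δ / 2 = a := by rw [hsdef]; ring
    have hsb : (c - s) + δ / 2 = b := by rw [hsdef, hδdef]; ring
    have hscc : s + (c - s) = c := by ring
    rw [hsa, hsb, hscc] at hL1
    have hsinhc : 0 < Real.sinh c := Real.sinh_pos_iff.2 hc0
    have hcm : Real.cosh (dist y₂ m) ≤ Real.exp (δ / 2) := by
      have h4 := hC2.trans hL1
      exact le_of_mul_le_mul_right h4 hsinhc
    have hd2 : dist y₂ m ≤ arcosh (Real.exp (δ / 2)) := by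
      have hcm2 : Real.cosh (dist y₂ m) ≤ Real.cosh (arcosh (Real.exp (δ / 2))) := by
        rwa [cosh_arcosh_exp (by linarith : (0:ℝ) ≤ δ / 2)]
      have h5 := Real.cosh_le_cosh.1 hcm2
      rwa [abs_of_nonneg dist_nonneg,
        abs_of_nonneg (arcosh_exp_nonneg (by linarith : (0:ℝ) ≤ δ / 2))] at h5
    have hd3 : dist y₂ m ≤ h - δ / 2 := by
      have hC := claimC hδ0
      have hM : arcosh (Real.exp δ) ≤ h := arcosh_exp_mono hδ0 hδη
      linarith
    set eps := η₁ + h - δ with hepsdef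
    have heps0 : 0 ≤ eps := by rw [hepsdef]; linarith
    have hu1 : r + s - eps ≤ dist y₀ m := by
      have t1 : p02 ≤ dist y₀ m + dist y₂ m := by
        calc p02 ≤ dist y₀ m + dist m y₂ := dist_triangle y₀ m y₂
          _ = dist y₀ m + dist y₂ m := by rw [dist_comm m y₂]
      rw [hsdef, hepsdef]
      linarith [h₁]
    have hu2 : s - r ≤ dist y₀ m := by
      have t1 : dist y₁ m ≤ dist y₁ y₀ + dist y₀ m := dist_triangle y₁ y₀ m
      rw [hm1', dist_comm y₁ y₀, ← hr] at t1
      linarith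
    have hwrc : r - c ≤ p03 := by
      have t1 : r ≤ p03 + c := by
        calc r ≤ dist y₀ y₃ + dist y₃ y₁ := dist_triangle y₀ y₃ y₁
          _ = p03 + c := by rw [dist_comm y₃ y₁]
      linarith
    have hC0 := hcomp y₀ y₁ y₃ m hsum
    rw [hm1', hm2', ← hc, ← hr, ← hp03] at hC0
    have hext := extrap hs0 hcs heps0 hu1 hu2 hp03n hwrc hC0
    have hfin := final_alg (E := η₁ + h) (c := c) hpos hb0 hδ0 hδ2b
      (by linarith : δ ≤ η₁ + h) hT (by rw [hδdef]; ring)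
    rw [← hsdef, ← hepsdef] at hfin
    have hone : (1 + b / a) * (η₁ + h) = (a + b) / a * (η₁ + h) := by
      field_simp
    rw [hone]
    linarith [hext, hfin]
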